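/- arXiv:1812.00222 — 5 statements merged into one kernel-verified Lean document; each statement's English description precedes it below -/
import Mathlib

section
/- If $G$ is a finite $p$-group of order $p^k$ and $A$ is a maximal abelian normal subgroup of $G$ with $|A| = p^s$, then $k \leq s(s+1)/2$. -/
open Subgroup
universe u

/-- Restriction of an automorphism action to an invariant subgroup. -/
def autRestrict {A : Type u} [Group A] (M : Subgroup A) {P : Type*} [Group P]
    (φ : P →* MulAut A) (hinv : ∀ (g : P), ∀ a ∈ M, φ g a ∈ M) : P →* MulAut ↥M where
  toFun g :=
    { toFun := fun b => ⟨φ g (b : A), hinv g (b : A) b.2⟩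
      invFun := fun b => ⟨φ g⁻¹ (b : A), hinv g⁻¹ (b : A) b.2⟩
      left_inv := fun b => Subtype.ext (show φ g⁻¹ (φ g (b : A)) = (b : A) by
        rw [map_inv]; exact (φ g).symm_apply_apply (b : A))
      right_inv := fun b => Subtype.ext (show φ g (φ g⁻¹ (b : A)) = (b : A) by
        rw [map_inv]; exact (φ g).apply_symm_apply (b : A))
      map_mul' := fun b c => Subtype.ext (map_mul (φ g) (b : A) (c : A)) }
  map_one' := by ext b; simp
  map_mul' g h := by ext b; simp

theorem autRestrict_apply {A : Type u} [Group A] (M : Subgroup A) {P : Type*} [Group P]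
    (φ : P →* MulAut A) (hinv : ∀ (g : P), ∀ a ∈ M, φ g a ∈ M) (g : P) (b : ↥M) :
    (autRestrict M φ hinv g b : A) = φ g (b : A) := rfl

theorem faithful_pgroup_aut_bound (p : ℕ) (hp : p.Prime) :
    ∀ (s : ℕ) (A : Type u) [CommGroup A] [Finite A], Nat.card A = p ^ s →
      ∀ (P : Type u) [Group P] [Finite P], IsPGroup p P →
      ∀ φ : P →* MulAut A, Function.Injective φ → Nat.card P ≤ p ^ (s.choose 2) := by
  haveI := Fact.mk hp
  intro s
  induction s with
  | zero =>
    intro A _ _ hA P _ _ hP φ hφ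
    have hsub : Subsingleton A := (Nat.card_eq_one_iff_unique.mp (by simpa using hA)).1
    have : Subsingleton P := ⟨fun a b => hφ (by ext x; exact Subsingleton.elim _ _)⟩
    simpa using Nat.card_le_one_iff_subsingleton.mpr this
  | succ s ih =>
    intro A _ _ hA P _ _ hP φ hφ
    have hpA : IsPGroup p A := IsPGroup.of_card hA
    have hA1 : Nontrivial A := by
      rw [← Finite.one_lt_card_iff_nontrivial, hA]
      exact Nat.one_lt_pow (Nat.succ_ne_zero s) hp.one_lt
    haveI : Finite (Subgroup A) :=
      Finite.of_injective (fun B : Subgroup A => (B : Set A)) SetLike.coe_injective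
    -- a maximal proper invariant subgroup M
    set S : Set (Subgroup A) := {B | B ≠ ⊤ ∧ ∀ g : P, ∀ a ∈ B, φ g a ∈ B} with hS
    have hbot : (⊥ : Subgroup A) ∈ S := by
      refine ⟨bot_ne_top, fun g a ha => ?_⟩
      rw [Subgroup.mem_bot] at ha ⊢
      simp [ha]
    obtain ⟨M, hMS, hMmax⟩ : ∃ M ∈ S, ∀ B ∈ S, id M ≤ id B → id M = id B := by
      obtain ⟨M, hM⟩ := (Set.toFinite S).exists_maximal ⟨⊥, hbot⟩
      exact ⟨M, hM.1, fun B hB h => le_antisymm h (hM.2 hB h)⟩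
    obtain ⟨hMne, hMinv⟩ := hMS
    -- the action of P on the quotient A ⧸ M
    have hle : ∀ g : P, M ≤ M.comap (φ g).toMonoidHom := fun g a ha => hMinv g a ha
    letI act : MulAction P (A ⧸ M) :=
      { smul := fun g q => QuotientGroup.map M M (φ g).toMonoidHom (hle g) q
        one_smul := fun q => by
          induction q using QuotientGroup.induction_on with
          | _ a => exact congrArg (QuotientGroup.mk) (by simp)
        mul_smul := fun g h q => by
          induction q using QuotientGroup.induction_on with
          | _ a =>
            show QuotientGroup.map M M (φ (g * h)).toMonoidHom _ _
              = QuotientGroup.map M M (φ g).toMonoidHom _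
                  (QuotientGroup.map M M (φ h).toMonoidHom _ _)
            rw [QuotientGroup.map_mk, QuotientGroup.map_mk, QuotientGroup.map_mk]
            exact congrArg (QuotientGroup.mk) (by simp) }
    have smul_mk : ∀ (g : P) (a : A),
        g • (QuotientGroup.mk a : A ⧸ M) = QuotientGroup.mk (φ g a) := fun g a =>
      QuotientGroup.map_mk M M (φ g).toMonoidHom (hle g) a
    -- nontriviality of the quotient
    obtain ⟨aw, haw⟩ : ∃ a : A, a ∉ M := by
      by_contra h
      push_neg at h
      exact hMne (Subgroup.eq_top_iff' M |>.mpr h)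
    haveI hQnt : Nontrivial (A ⧸ M) :=
      ⟨⟨QuotientGroup.mk aw, 1, by simpa [QuotientGroup.eq_one_iff] using haw⟩⟩
    obtain ⟨t, ht⟩ := (IsPGroup.iff_card).mp (hpA.to_quotient M)
    have ht0 : t ≠ 0 := by
      rintro rfl
      have := Finite.one_lt_card_iff_nontrivial.mpr hQnt
      rw [ht] at this
      simp at this
    have hdvdQ : p ∣ Nat.card (A ⧸ M) := by
      rw [ht]; exact dvd_pow_self p ht0
    -- the action on the quotient is trivial
    have hMtriv : ∀ (g : P) (a : A), φ g a * a⁻¹ ∈ M := by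
      -- a nontrivial fixed point exists
      have hone : (1 : A ⧸ M) ∈ MulAction.fixedPoints P (A ⧸ M) := by
        intro g
        show QuotientGroup.map M M (φ g).toMonoidHom (hle g) 1 = 1
        exact map_one _
      have hfix : ∃ q : A ⧸ M, (∀ g : P, g • q = q) ∧ q ≠ 1 := by
        by_contra h
        push_neg at h
        have hsingle : MulAction.fixedPoints P (A ⧸ M) = {1} := by
          apply Set.eq_singleton_iff_unique_mem.mpr
          exact ⟨hone, fun q hq => h q hq⟩
        have hmod := IsPGroup.card_modEq_card_fixedPoints hP (A ⧸ M)
        rw [hsingle] at hmod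
        have h1 : Nat.card ({1} : Set (A ⧸ M)) = 1 := by simp
        rw [h1] at hmod
        have hpd : p ∣ 1 := Nat.modEq_zero_iff_dvd.mp
          (hmod.symm.trans (Nat.modEq_zero_iff_dvd.mpr hdvdQ))
        exact hp.one_lt.ne' (Nat.dvd_one.mp hpd)
      obtain ⟨q, hq, hq1⟩ := hfix
      obtain ⟨a₀, rfl⟩ := QuotientGroup.mk_surjective q
      have ha₀M : a₀ ∉ M := fun h => hq1 ((QuotientGroup.eq_one_iff a₀).mpr h)
      -- the subgroup of elements moved into M
      let N : Subgroup A :=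
        { carrier := {a : A | ∀ g : P, φ g a * a⁻¹ ∈ M}
          one_mem' := fun g => by simpa using M.one_mem
          mul_mem' := by
            intro a b ha hb g
            have e : φ g (a * b) * (a * b)⁻¹ = (φ g a * a⁻¹) * (φ g b * b⁻¹) := by
              rw [map_mul, mul_inv]
              exact mul_mul_mul_comm _ _ _ _
            rw [e]
            exact M.mul_mem (ha g) (hb g)
          inv_mem' := by
            intro a ha g
            have h1 := M.inv_mem (ha g)
            rw [mul_inv_rev, inv_inv] at h1
            rw [map_inv, inv_inv, mul_comm]
            exact h1 }
      have hMN : M ≤ N := fun a ha g => M.mul_mem (hMinv g a ha) (M.inv_mem ha)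
      have hNinv : ∀ g : P, ∀ a ∈ N, φ g a ∈ N := by
        intro h a ha g
        have e : φ g (φ h a) * (φ h a)⁻¹ = (φ (g * h) a * a⁻¹) * (φ h a * a⁻¹)⁻¹ := by
          rw [map_mul, MulAut.mul_apply]
          group
        rw [e]
        exact M.mul_mem (ha (g * h)) (M.inv_mem (ha h))
      have ha₀N : a₀ ∈ N := by
        intro g
        have := hq g
        rw [smul_mk] at this
        have h2 := (QuotientGroup.eq (s := M)).mp this.symm
        rw [mul_comm] at h2
        exact h2
      have hNtop : N = ⊤ := by
        by_contra hN
        have := hMmax N ⟨hN, hNinv⟩ hMN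
        simp only [id] at this
        rw [← this] at ha₀N
        exact ha₀M ha₀N
      intro g a
      have : a ∈ N := hNtop ▸ Subgroup.mem_top a
      exact this g
    -- a compatible congruence: mk (φ g a) = mk a
    have hmk : ∀ (g : P) (a : A), (QuotientGroup.mk (φ g a) : A ⧸ M) = QuotientGroup.mk a := by
      intro g a
      apply (QuotientGroup.eq (s := M)).mpr
      have h1 := M.inv_mem (hMtriv g a)
      rw [mul_inv_rev, inv_inv] at h1
      rw [mul_comm] at h1
      exact h1
    -- the quotient A ⧸ M has order exactly p
    have hcardQ : Nat.card (A ⧸ M) = p := by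
      obtain ⟨q, hq⟩ := exists_prime_orderOf_dvd_card' p hdvdQ
      have hq1 : q ≠ 1 := by
        intro h; rw [h, orderOf_one] at hq; exact hp.one_lt.ne' hq.symm
      set T := (Subgroup.zpowers q).comap (QuotientGroup.mk' M) with hT
      have hMT : M ≤ T := by
        intro a ha
        rw [hT, Subgroup.mem_comap, QuotientGroup.mk'_apply,
          (QuotientGroup.eq_one_iff a).mpr ha]
        exact Subgroup.one_mem _
      have hTinv : ∀ g : P, ∀ a ∈ T, φ g a ∈ T := by
        intro g a haT
        rw [hT, Subgroup.mem_comap, QuotientGroup.mk'_apply] at haT ⊢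
        rw [hmk g a]
        exact haT
      by_cases hTtop : T = ⊤
      · have hmapT : Subgroup.map (QuotientGroup.mk' M) T = Subgroup.zpowers q :=
          Subgroup.map_comap_eq_self_of_surjective (QuotientGroup.mk'_surjective M) _
        rw [hTtop, Subgroup.map_top_of_surjective _ (QuotientGroup.mk'_surjective M)] at hmapT
        rw [← hq, ← Nat.card_zpowers, ← hmapT, Subgroup.card_top]
      · exfalso
        have hMeqT := hMmax T ⟨hTtop, hTinv⟩ hMT
        simp only [id] at hMeqT
        have h1 : Subgroup.map (QuotientGroup.mk' M) T = Subgroup.zpowers q :=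
          Subgroup.map_comap_eq_self_of_surjective (QuotientGroup.mk'_surjective M) _
        rw [← hMeqT] at h1
        have h2 : Subgroup.map (QuotientGroup.mk' M) M = ⊥ :=
          (Subgroup.map_eq_bot_iff _).mpr (le_of_eq (QuotientGroup.ker_mk' M).symm)
        rw [h2] at h1
        exact hq1 (Subgroup.zpowers_eq_bot.mp h1.symm)
    -- hence M has order p ^ s
    have hcardM : Nat.card ↥M = p ^ s := by
      have hc := Subgroup.card_eq_card_quotient_mul_card_subgroup M
      rw [hA, hcardQ, pow_succ'] at hc
      exact (Nat.eq_of_mul_eq_mul_left hp.pos hc).symm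
    -- the restriction homomorphism and its kernel
    set K : Subgroup P := (autRestrict M φ hMinv).ker with hK
    -- M together with aw generates A
    have horder : orderOf ((QuotientGroup.mk aw : A ⧸ M)) = p := by
      have h1 : (QuotientGroup.mk aw : A ⧸ M) ≠ 1 := fun h =>
        haw ((QuotientGroup.eq_one_iff aw).mp h)
      have h2 : orderOf (QuotientGroup.mk aw : A ⧸ M) ∣ p := by
        rw [← hcardQ]; exact orderOf_dvd_natCard _
      exact (hp.eq_one_or_self_of_dvd _ h2).resolve_left
        (by simpa [orderOf_eq_one_iff] using h1)
    have hztop : Subgroup.zpowers (QuotientGroup.mk aw : A ⧸ M) = ⊤ := by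
      apply Subgroup.eq_top_of_card_eq
      rw [Nat.card_zpowers, horder, hcardQ]
    have hsuptop : M ⊔ Subgroup.zpowers aw = ⊤ := by
      have hmap : Subgroup.map (QuotientGroup.mk' M) (M ⊔ Subgroup.zpowers aw) = ⊤ := by
        rw [Subgroup.map_sup, MonoidHom.map_zpowers,
          (Subgroup.map_eq_bot_iff _).mpr (le_of_eq (QuotientGroup.ker_mk' M).symm),
          bot_sup_eq, QuotientGroup.mk'_apply]
        exact hztop
      have h2 := Subgroup.comap_map_eq (QuotientGroup.mk' M) (M ⊔ Subgroup.zpowers aw)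
      rw [hmap, QuotientGroup.ker_mk', Subgroup.comap_top] at h2
      have h3 : (M ⊔ Subgroup.zpowers aw) ⊔ M = M ⊔ Subgroup.zpowers aw :=
        sup_eq_left.mpr le_sup_left
      rw [h3] at h2
      exact h2.symm
    -- the kernel K injects into M
    have hKcard : Nat.card ↥K ≤ p ^ s := by
      rw [← hcardM]
      have hinj : Function.Injective
          (fun g : ↥K => (⟨φ (g : P) aw * aw⁻¹, hMtriv _ _⟩ : ↥M)) := by
        intro g h hgh
        have hgh' : φ (g : P) aw = φ (h : P) aw := by
          have h0 := congrArg Subtype.val hgh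
          simp only at h0
          exact mul_right_cancel h0
        have hgM : ∀ b (hb : b ∈ M), φ (g : P) b = b := by
          intro b hb
          have hg1 : autRestrict M φ hMinv (g : P) = 1 := g.2
          have := congrArg (fun e : MulAut ↥M => ((e ⟨b, hb⟩ : ↥M) : A)) hg1
          simpa [autRestrict_apply] using this
        have hhM : ∀ b (hb : b ∈ M), φ (h : P) b = b := by
          intro b hb
          have hh1 : autRestrict M φ hMinv (h : P) = 1 := h.2
          have := congrArg (fun e : MulAut ↥M => ((e ⟨b, hb⟩ : ↥M) : A)) hh1
          simpa [autRestrict_apply] using this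
        have hloc : M ⊔ Subgroup.zpowers aw ≤
            MonoidHom.eqLocus (φ (g : P)).toMonoidHom (φ (h : P)).toMonoidHom := by
          apply sup_le
          · intro b hb
            show φ (g : P) b = φ (h : P) b
            rw [hgM b hb, hhM b hb]
          · rw [Subgroup.zpowers_le]
            exact hgh'
        rw [hsuptop] at hloc
        have hfeq : φ (g : P) = φ (h : P) := by
          ext x
          exact hloc (Subgroup.mem_top x)
        exact Subtype.ext (hφ hfeq)
      exact Nat.card_le_card_of_injective _ hinj
    -- apply the induction hypothesis to P ⧸ K acting faithfully on M
    have hPK : Nat.card (P ⧸ K) ≤ p ^ (s.choose 2) :=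
      ih ↥M hcardM (P ⧸ K) (hP.to_quotient K)
        (QuotientGroup.kerLift (autRestrict M φ hMinv))
        (QuotientGroup.kerLift_injective _)
    calc Nat.card P = Nat.card (P ⧸ K) * Nat.card ↥K :=
          Subgroup.card_eq_card_quotient_mul_card_subgroup K
      _ ≤ p ^ (s.choose 2) * p ^ s := Nat.mul_le_mul hPK hKcard
      _ = p ^ ((s + 1).choose 2) := by
          rw [← pow_add]
          congr 1
          rw [Nat.choose_succ_succ, Nat.choose_one_right, Nat.add_comm]


theorem abelian_normal_max_bound (p k s : ℕ) (hp : p.Prime)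
    (G : Type*) [Group G] [Finite G] (hG : Nat.card G = p ^ k)
    (A : Subgroup G) (hAn : A.Normal) (hAc : IsMulCommutative A)
    (hmax : ∀ B : Subgroup G, B.Normal → IsMulCommutative B → A ≤ B → B = A)
    (hA : Nat.card A = p ^ s) :
    k ≤ s * (s + 1) / 2 := by
  haveI := Fact.mk hp
  haveI := hAn
  haveI := hAc
  have hGp : IsPGroup p G := IsPGroup.of_card hG
  set C := Subgroup.centralizer (A : Set G) with hCdef
  have hAC : A ≤ C := Subgroup.le_centralizer A
  have hCN : C.Normal := by
    constructor
    intro n hn g a ha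
    have h1 : g⁻¹ * a * g ∈ A := by
      have := hAn.conj_mem a ha g⁻¹
      simpa using this
    have h2 := hn _ h1
    calc a * (g * n * g⁻¹) = g * ((g⁻¹ * a * g) * n) * g⁻¹ := by group
      _ = g * (n * (g⁻¹ * a * g)) * g⁻¹ := by rw [h2]
      _ = (g * n * g⁻¹) * a := by group
  -- the centralizer of A is A itself
  have hCA : C ≤ A := by
    by_contra hCA
    obtain ⟨x₁, hx₁C, hx₁A⟩ := SetLike.not_le_iff_exists.mp hCA
    set mk : G →* G ⧸ A := QuotientGroup.mk' A with hmkdef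
    set D := C.map mk with hDdef
    haveI hDn : D.Normal := hCN.map mk (QuotientGroup.mk'_surjective A)
    have hQp : IsPGroup p (G ⧸ A) := hGp.to_quotient A
    haveI hDnt : Nontrivial ↥D := by
      refine ⟨⟨⟨mk x₁, Subgroup.mem_map_of_mem mk hx₁C⟩, 1, ?_⟩⟩
      intro h
      have : mk x₁ = 1 := congrArg Subtype.val h
      rw [hmkdef, QuotientGroup.mk'_apply, QuotientGroup.eq_one_iff] at this
      exact hx₁A this
    letI actD : MulAction (G ⧸ A) ↥D :=
      MulAction.compHom _ (MulAut.conjNormal : (G ⧸ A) →* MulAut ↥D)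
    have hsmul : ∀ (g : G ⧸ A) (d : ↥D), g • d = MulAut.conjNormal g d := fun _ _ => rfl
    -- a nontrivial fixed point of the conjugation action on D
    have hfix : ∃ d : ↥D, (∀ g : G ⧸ A, g • d = d) ∧ d ≠ 1 := by
      have hone : (1 : ↥D) ∈ MulAction.fixedPoints (G ⧸ A) ↥D := fun g => by
        rw [hsmul]; exact map_one _
      obtain ⟨t, ht⟩ := (IsPGroup.iff_card).mp (hQp.to_subgroup D)
      have ht0 : t ≠ 0 := by
        rintro rfl
        have := Finite.one_lt_card_iff_nontrivial.mpr hDnt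
        rw [ht] at this
        simp at this
      have hdvd : p ∣ Nat.card ↥D := by rw [ht]; exact dvd_pow_self p ht0
      by_contra h
      push_neg at h
      have hsingle : MulAction.fixedPoints (G ⧸ A) ↥D = {1} :=
        Set.eq_singleton_iff_unique_mem.mpr ⟨hone, fun q hq => h q hq⟩
      have hmod := IsPGroup.card_modEq_card_fixedPoints hQp ↥D
      rw [hsingle] at hmod
      have h1 : Nat.card ({1} : Set ↥D) = 1 := by simp
      rw [h1] at hmod
      have hpd : p ∣ 1 := Nat.modEq_zero_iff_dvd.mp
        (hmod.symm.trans (Nat.modEq_zero_iff_dvd.mpr hdvd))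
      exact hp.one_lt.ne' (Nat.dvd_one.mp hpd)
    obtain ⟨d, hd, hd1⟩ := hfix
    -- d is central in G ⧸ A
    have hcenter : (d : G ⧸ A) ∈ Subgroup.center (G ⧸ A) := by
      rw [Subgroup.mem_center_iff]
      intro g
      have h1 : ((MulAut.conjNormal g d : ↥D) : G ⧸ A) = (d : G ⧸ A) := by
        rw [← hsmul, hd g]
      rw [MulAut.conjNormal_apply] at h1
      calc g * (d : G ⧸ A) = (g * d * g⁻¹) * g := by group
        _ = (d : G ⧸ A) * g := by rw [h1]
    -- choose x in C mapping to d
    obtain ⟨x, hxC, hmkx⟩ := Subgroup.mem_map.mp d.2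
    have hxA : x ∉ A := by
      intro hxA
      apply hd1
      apply Subtype.ext
      rw [← hmkx, hmkdef, QuotientGroup.mk'_apply]
      exact (QuotientGroup.eq_one_iff x).mpr hxA
    -- B := preimage of ⟨d⟩
    haveI hzn : (Subgroup.zpowers (d : G ⧸ A)).Normal := by
      constructor
      intro n hn g
      have hcn : n ∈ Subgroup.center (G ⧸ A) := Subgroup.zpowers_le.mpr hcenter hn
      have h2 := Subgroup.mem_center_iff.mp hcn g
      have h3 : g * n * g⁻¹ = n := by rw [h2]; group
      rw [h3]; exact hn
    set B := (Subgroup.zpowers (d : G ⧸ A)).comap mk with hBdef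
    have hBn : B.Normal := hzn.comap mk
    have hABle : A ≤ B := by
      intro a ha
      rw [hBdef, Subgroup.mem_comap, hmkdef, QuotientGroup.mk'_apply,
        (QuotientGroup.eq_one_iff a).mpr ha]
      exact Subgroup.one_mem _
    have hxB : x ∈ B := by
      rw [hBdef, Subgroup.mem_comap, hmkx]
      exact Subgroup.mem_zpowers _
    have hBc : IsMulCommutative B := by
      have hdec : ∀ b ∈ B, ∃ m ∈ A, ∃ n : ℤ, b = m * x ^ n := by
        intro b hb
        rw [hBdef, Subgroup.mem_comap] at hb
        obtain ⟨n, hn⟩ := Subgroup.mem_zpowers_iff.mp hb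
        refine ⟨b * (x ^ n)⁻¹, ?_, n, by group⟩
        have h1 : mk (x ^ n) = (d : G ⧸ A) ^ n := by rw [← hmkx]; exact map_zpow mk x n
        have h2 : mk (b * (x ^ n)⁻¹) = 1 := by
          rw [map_mul, map_inv, h1, hn, mul_inv_cancel]
        rw [hmkdef, QuotientGroup.mk'_apply, QuotientGroup.eq_one_iff] at h2
        exact h2
      constructor; constructor
      rintro ⟨b₁, hb₁⟩ ⟨b₂, hb₂⟩
      apply Subtype.ext
      show b₁ * b₂ = b₂ * b₁
      obtain ⟨m₁, hm₁, n₁, rfl⟩ := hdec b₁ hb₁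
      obtain ⟨m₂, hm₂, n₂, rfl⟩ := hdec b₂ hb₂
      have hcxm : ∀ m, m ∈ A → Commute m x := fun m hm => hxC m hm
      have c11 : Commute m₁ m₂ := Subgroup.mul_comm_of_mem_isMulCommutative A hm₁ hm₂
      have c12 : Commute m₁ (x ^ n₂) := (hcxm m₁ hm₁).zpow_right n₂
      have c21 : Commute (x ^ n₁) m₂ := ((hcxm m₂ hm₂).symm).zpow_left n₁
      have c22 : Commute (x ^ n₁ : G) (x ^ n₂) := (Commute.refl x).zpow_zpow n₁ n₂
      exact (c11.mul_right c12).mul_left (c21.mul_right c22)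
    have hBA := hmax B hBn hBc hABle
    rw [hBA] at hxB
    exact hxA hxB
  have hCeq : C = A := le_antisymm hCA hAC
  -- conjugation gives a faithful action of G ⧸ A on A
  set φ : G →* MulAut ↥A := MulAut.conjNormal with hφdef
  have hkerC : φ.ker = C := by
    ext g
    rw [MonoidHom.mem_ker]
    constructor
    · intro h a ha
      have h2 : ((φ g ⟨a, ha⟩ : ↥A) : G) = a := by rw [h]; rfl
      have h2' : g * a * g⁻¹ = a := by simpa [hφdef] using h2
      calc a * g = (g * a * g⁻¹) * g := by rw [h2']
        _ = g * a := by group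
    · intro h
      ext a
      have h2 : (a : G) * g = g * a := h (a : G) a.2
      show ((φ g a : ↥A) : G) = (((1 : MulAut ↥A) a : ↥A) : G)
      rw [hφdef, MulAut.conjNormal_apply, MulAut.one_apply]
      calc g * (a : G) * g⁻¹ = (a * g) * g⁻¹ := by rw [← h2]
        _ = a := by group
  have hker : φ.ker = A := hkerC.trans hCeq
  open scoped IsMulCommutative in
  have hbound := faithful_pgroup_aut_bound p hp s ↥A hA (G ⧸ φ.ker)
    (hGp.to_quotient φ.ker) (QuotientGroup.kerLift φ) (QuotientGroup.kerLift_injective φ)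
  obtain ⟨m, hm⟩ := (IsPGroup.iff_card).mp (hGp.to_quotient φ.ker)
  have hkA : Nat.card ↥(φ.ker) = p ^ s := by rw [hker]; exact hA
  have hcardeq := Subgroup.card_eq_card_quotient_mul_card_subgroup φ.ker
  rw [hG, hm, hkA, ← pow_add] at hcardeq
  have hks : k = m + s := Nat.pow_right_injective hp.two_le hcardeq
  have hmle : m ≤ s.choose 2 := by
    rw [hm] at hbound
    exact (Nat.pow_le_pow_iff_right hp.one_lt).mp hbound
  have h3 : (s + 1).choose 2 = s + s.choose 2 := by
    rw [Nat.choose_succ_succ, Nat.choose_one_right]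
  have h4 : (s + 1).choose 2 = s * (s + 1) / 2 := by
    rw [Nat.choose_two_right, Nat.add_sub_cancel, Nat.mul_comm]
  omega
end

section
/- If $G$ is a finite $p$-group of order $p^k$ with $|G : \Phi(G)| = p^d$, then $|\mathrm{Aut}(G)|$ divides $p^{d(k-d)} \cdot |\mathrm{GL}_d(\mathbb{F}_p)|$. -/
open Subgroup
open scoped commutatorElement

lemma coatom_normal_aux {p : ℕ} {G : Type*} [Group G] [Finite G] (hp : p.Prime)
    (hPG : IsPGroup p G) {M : Subgroup G} (hM : IsCoatom M) : M.Normal := by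
  haveI : Fact p.Prime := ⟨hp⟩
  have h1 : Group.IsNilpotent G := hPG.isNilpotent
  exact NormalizerCondition.normal_of_coatom M normalizerCondition_of_isNilpotent hM

lemma coatom_card_aux {p : ℕ} {G : Type*} [Group G] [Finite G] (hp : p.Prime)
    (hPG : IsPGroup p G) {M : Subgroup G} (hM : IsCoatom M) [M.Normal] :
    Nat.card (G ⧸ M) = p := by
  haveI : Fact p.Prime := ⟨hp⟩
  have hQ : IsPGroup p (G ⧸ M) := hPG.to_quotient M
  obtain ⟨g, hg⟩ : ∃ g : G, g ∉ M := by
    by_contra hcon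
    push_neg at hcon
    exact hM.1 ((Subgroup.eq_top_iff' M).2 hcon)
  have hnt : Nontrivial (G ⧸ M) :=
    ⟨⟨QuotientGroup.mk g, 1, by simpa [QuotientGroup.eq_one_iff] using hg⟩⟩
  have hdvd : p ∣ Nat.card (G ⧸ M) := by
    obtain ⟨n, hn⟩ := IsPGroup.iff_card.mp hQ
    rcases n with _ | n
    · rw [pow_zero] at hn
      have := Finite.one_lt_card_iff_nontrivial.mpr hnt
      omega
    · exact hn ▸ dvd_pow_self p (Nat.succ_ne_zero n)
  obtain ⟨x, hx⟩ : ∃ x : G ⧸ M, orderOf x = p := by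
    have := Fintype.ofFinite (G ⧸ M)
    exact exists_prime_orderOf_dvd_card p (by rwa [← Nat.card_eq_fintype_card])
  set N := Subgroup.comap (QuotientGroup.mk' M) (Subgroup.zpowers x) with hN
  have hMN : M ≤ N := by
    intro m hm
    simp only [hN, Subgroup.mem_comap, QuotientGroup.mk'_apply]
    rw [(QuotientGroup.eq_one_iff m).2 hm]
    exact one_mem _
  have hneq : N ≠ M := by
    obtain ⟨g', hg'⟩ := QuotientGroup.mk'_surjective M x
    intro hcon
    have hg'N : g' ∈ N := by
      simp only [hN, Subgroup.mem_comap, hg']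
      exact Subgroup.mem_zpowers x
    rw [hcon] at hg'N
    have : x = 1 := hg' ▸ (QuotientGroup.eq_one_iff g').2 hg'N
    rw [this, orderOf_one] at hx
    exact hp.one_lt.ne' hx.symm
  have hNtop : N = ⊤ := hM.2 N (lt_of_le_of_ne hMN (Ne.symm hneq))
  have hz : Subgroup.zpowers x = ⊤ := by
    have h2 := congrArg (Subgroup.map (QuotientGroup.mk' M)) hNtop
    rwa [Subgroup.map_comap_eq_self_of_surjective (QuotientGroup.mk'_surjective M),
      Subgroup.map_top_of_surjective _ (QuotientGroup.mk'_surjective M)] at h2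
  rw [← hx, ← Nat.card_zpowers, hz]
  exact (Nat.card_congr Subgroup.topEquiv.toEquiv).symm

lemma frattini_mem_aux {p : ℕ} {G : Type*} [Group G] [Finite G] (hp : p.Prime)
    (hPG : IsPGroup p G) :
    (∀ g h : G, ⁅g, h⁆ ∈ frattini G) ∧ (∀ g : G, g ^ p ∈ frattini G) := by
  haveI : Fact p.Prime := ⟨hp⟩
  have hmem : ∀ x : G, (∀ M : Subgroup G, IsCoatom M → x ∈ M) → x ∈ frattini G := by
    intro x hx
    unfold frattini Order.radical
    rw [Subgroup.mem_iInf]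
    intro M
    rw [Subgroup.mem_iInf]
    intro hM
    exact hx M hM
  have key : ∀ M : Subgroup G, IsCoatom M → (∀ g h : G, ⁅g, h⁆ ∈ M) ∧ (∀ g : G, g ^ p ∈ M) := by
    intro M hM
    haveI : M.Normal := coatom_normal_aux hp hPG hM
    have hc : Nat.card (G ⧸ M) = p := coatom_card_aux hp hPG hM
    haveI : IsCyclic (G ⧸ M) := isCyclic_of_prime_card hc
    letI : CommGroup (G ⧸ M) := IsCyclic.commGroup
    constructor
    · intro g h
      rw [← QuotientGroup.eq_one_iff]
      have : ((⁅g, h⁆ : G) : G ⧸ M) = ⁅(g : G ⧸ M), (h : G ⧸ M)⁆ :=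
        map_commutatorElement (QuotientGroup.mk' M) g h
      rw [this]
      exact commutatorElement_eq_one_iff_mul_comm.mpr (mul_comm _ _)
    · intro g
      rw [← QuotientGroup.eq_one_iff]
      have : ((g ^ p : G) : G ⧸ M) = (g : G ⧸ M) ^ p := by
        exact QuotientGroup.mk_pow M g p
      rw [this, ← hc]
      exact pow_card_eq_one'
  exact ⟨fun g h => hmem _ fun M hM => (key M hM).1 g h,
    fun g => hmem _ fun M hM => (key M hM).2 g⟩

lemma card_generating_tuples (p d : ℕ) (hp : p.Prime) (V : Type*) [CommGroup V] [Finite V]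
    (hcard : Nat.card V = p ^ d) (hexp : ∀ v : V, v ^ p = 1) :
    Nat.card {f : Fin d → V // Subgroup.closure (Set.range f) = ⊤}
      = Nat.card (GL (Fin d) (ZMod p)) := by
  haveI : Fact p.Prime := ⟨hp⟩
  haveI : NeZero p := ⟨hp.pos.ne'⟩
  have hsmul : ∀ x : Additive V, p • x = 0 := by
    intro x
    have h1 : p • x = p • Additive.ofMul x.toMul := rfl
    rw [h1, ← ofMul_pow, hexp, ofMul_one]
  letI : Module (ZMod p) (Additive V) := AddCommGroup.zmodModule (n := p) hsmul
  haveI : Fintype V := Fintype.ofFinite V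
  haveI : Fintype (Additive V) := ‹Fintype V›
  have hfr : Module.finrank (ZMod p) (Additive V) = d := by
    have h1 : Fintype.card (Additive V) = p ^ Module.finrank (ZMod p) (Additive V) := by
      have h2 := Module.card_eq_pow_finrank (K := ZMod p) (V := Additive V)
      rwa [ZMod.card] at h2
    have h2 : Fintype.card (Additive V) = p ^ d := by
      rw [← Nat.card_eq_fintype_card, ← hcard]
      exact Nat.card_congr Additive.toMul
    exact Nat.pow_right_injective hp.two_le (h1.symm.trans h2)
  have spaniff : ∀ f : Fin d → V, Subgroup.closure (Set.range f) = ⊤ ↔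
      Submodule.span (ZMod p) (Set.range fun i => Additive.ofMul (f i)) = (⊤ : Submodule (ZMod p) (Additive V)) := by
    intro f
    constructor
    · intro h
      have aux : ∀ y : V, y ∈ Subgroup.closure (Set.range f) →
          Additive.ofMul y ∈ Submodule.span (ZMod p)
            (Set.range fun i => Additive.ofMul (f i)) := by
        intro y hy
        induction hy using Subgroup.closure_induction with
        | mem z hz => obtain ⟨i, rfl⟩ := hz; exact Submodule.subset_span ⟨i, rfl⟩
        | one => simpa using zero_mem _
        | mul a b ha hb iha ihb => simpa [ofMul_mul] using add_mem iha ihb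
        | inv a ha iha => simpa [ofMul_inv] using neg_mem iha
      rw [Submodule.eq_top_iff']
      intro x
      exact aux x.toMul (by rw [h]; exact Subgroup.mem_top _)
    · intro h
      have aux : ∀ x : Additive V, x ∈ Submodule.span (ZMod p)
          (Set.range fun i => Additive.ofMul (f i)) →
          x.toMul ∈ Subgroup.closure (Set.range f) := by
        intro x hx
        induction hx using Submodule.span_induction with
        | mem z hz => obtain ⟨i, rfl⟩ := hz; exact Subgroup.subset_closure ⟨i, rfl⟩
        | zero => simpa using one_mem _
        | add a b ha hb iha ihb => simpa [toMul_add] using mul_mem iha ihb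
        | smul c a ha iha =>
            rw [show c • a = (c.val : ZMod p) • a by rw [ZMod.natCast_val, ZMod.cast_id],
              Nat.cast_smul_eq_nsmul]
            simpa [toMul_nsmul] using pow_mem iha c.val
      rw [Subgroup.eq_top_iff']
      intro y
      exact aux (Additive.ofMul y) (by rw [h]; exact Submodule.mem_top)
  have e1 : {f : Fin d → V // Subgroup.closure (Set.range f) = ⊤}
      ≃ {f : Fin d → Additive V // Submodule.span (ZMod p) (Set.range f) = ⊤} :=
    Equiv.subtypeEquiv (Equiv.piCongrRight fun _ => Additive.ofMul) (fun f => by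
      exact spaniff f)
  let b := Pi.basisFun (ZMod p) (Fin d)
  have e2 : {f : Fin d → Additive V // Submodule.span (ZMod p) (Set.range f) = ⊤}
      ≃ {g : (Fin d → ZMod p) →ₗ[ZMod p] Additive V // Function.Surjective ⇑g} :=
    Equiv.subtypeEquiv (b.constr ℕ).toEquiv (fun f => by
      show Submodule.span (ZMod p) (Set.range f) = ⊤ ↔ Function.Surjective ⇑(b.constr ℕ f)
      rw [← LinearMap.range_eq_top, Module.Basis.constr_range])
  have hfr2 : Module.finrank (ZMod p) (Fin d → ZMod p)
      = Module.finrank (ZMod p) (Additive V) := by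
    rw [hfr, Module.finrank_pi]
    simp
  have e3 : {g : (Fin d → ZMod p) →ₗ[ZMod p] Additive V // Function.Surjective ⇑g}
      ≃ ((Fin d → ZMod p) ≃ₗ[ZMod p] Additive V) :=
    { toFun := fun g => LinearEquiv.ofBijective g.1
        ⟨(LinearMap.injective_iff_surjective_of_finrank_eq_finrank hfr2).mpr g.2, g.2⟩
      invFun := fun e => ⟨e.toLinearMap, e.surjective⟩
      left_inv := fun g => Subtype.ext rfl
      right_inv := fun e => by ext x; rfl }
  obtain ⟨bV⟩ : Nonempty (Module.Basis (Fin d) (ZMod p) (Additive V)) :=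
    ⟨Module.finBasisOfFinrankEq (ZMod p) (Additive V) hfr⟩
  let e0 : Additive V ≃ₗ[ZMod p] (Fin d → ZMod p) := bV.equivFun
  have e4 : ((Fin d → ZMod p) ≃ₗ[ZMod p] Additive V)
      ≃ ((Fin d → ZMod p) ≃ₗ[ZMod p] (Fin d → ZMod p)) :=
    { toFun := fun f => f.trans e0
      invFun := fun f => f.trans e0.symm
      left_inv := fun f => by ext x; simp
      right_inv := fun f => by ext x; simp }
  have e5 : GL (Fin d) (ZMod p) ≃ ((Fin d → ZMod p) ≃ₗ[ZMod p] (Fin d → ZMod p)) :=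
    (Matrix.GeneralLinearGroup.toLin.trans
      (LinearMap.GeneralLinearGroup.generalLinearEquiv _ _)).toEquiv
  rw [Nat.card_congr (((e1.trans e2).trans e3).trans e4), Nat.card_congr e5.symm]

theorem aut_order_divides (p k d : ℕ) (hp : p.Prime)
    (G : Type*) [Group G] [Finite G] (hG : Nat.card G = p ^ k)
    (hd : Nat.card (G ⧸ frattini G) = p ^ d) :
    Nat.card (G ≃* G) ∣ p ^ (d * (k - d)) * Nat.card (GL (Fin d) (ZMod p)) := by
  haveI : Fact p.Prime := ⟨hp⟩
  have hPG : IsPGroup p G := IsPGroup.of_card hG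
  obtain ⟨hcomm, hpow⟩ := frattini_mem_aux hp hPG
  set Φ := frattini G with hΦdef
  -- commutative quotient
  letI commV : CommGroup (G ⧸ Φ) :=
    { (inferInstance : Group (G ⧸ Φ)) with
      mul_comm := by
        intro a b
        refine QuotientGroup.induction_on a fun g => QuotientGroup.induction_on b fun h => ?_
        have key : ((g * h : G) : G ⧸ Φ) = ((h * g : G) : G ⧸ Φ) := by
          rw [QuotientGroup.eq]
          have h2 := hcomm h⁻¹ g⁻¹
          simpa [commutatorElement_def, mul_assoc, mul_inv_rev] using h2
        rw [← QuotientGroup.mk_mul, ← QuotientGroup.mk_mul]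
        exact key }
  have hexpV : ∀ v : G ⧸ Φ, v ^ p = 1 := by
    intro v
    refine QuotientGroup.induction_on v fun g => ?_
    rw [← QuotientGroup.mk_pow]
    exact (QuotientGroup.eq_one_iff _).mpr (hpow g)
  have hcardGL : Nat.card {t : Fin d → G ⧸ Φ // Subgroup.closure (Set.range t) = ⊤}
      = Nat.card (GL (Fin d) (ZMod p)) :=
    card_generating_tuples p d hp (G ⧸ Φ) hd hexpV
  -- cardinality of Φ
  have hlagrange : Nat.card G = Nat.card (G ⧸ Φ) * Nat.card Φ :=
    Subgroup.card_eq_card_quotient_mul_card_subgroup Φ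
  have hdk : d ≤ k := by
    have h1 : p ^ d ∣ p ^ k := ⟨Nat.card Φ, by rw [← hG, hlagrange, hd]⟩
    exact (Nat.pow_dvd_pow_iff_le_right hp.one_lt).mp h1
  have hΦcard : Nat.card Φ = p ^ (k - d) := by
    have h1 : p ^ d * Nat.card Φ = p ^ d * p ^ (k - d) := by
      rw [← pow_add, Nat.add_sub_cancel' hdk, ← hG, hlagrange, hd]
    exact Nat.eq_of_mul_eq_mul_left (pow_pos hp.pos d) h1
  -- the lifting property
  have hQsurj : Function.Surjective (QuotientGroup.mk' Φ) := QuotientGroup.mk'_surjective Φ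
  haveI : Finite (Subgroup G) := Finite.of_injective _ SetLike.coe_injective
  have hlift : ∀ f : Fin d → G, Subgroup.closure (Set.range f) = ⊤ ↔
      Subgroup.closure (Set.range fun i => ((f i : G) : G ⧸ Φ)) = ⊤ := by
    intro f
    have hrange : (⇑(QuotientGroup.mk' Φ)) '' (Set.range f)
        = Set.range fun i => ((f i : G) : G ⧸ Φ) := by
      rw [← Set.range_comp]; rfl
    constructor
    · intro h
      have h2 := congrArg (Subgroup.map (QuotientGroup.mk' Φ)) h
      rw [MonoidHom.map_closure, Subgroup.map_top_of_surjective _ hQsurj, hrange] at h2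
      exact h2
    · intro h
      have h3 : Subgroup.comap (QuotientGroup.mk' Φ)
          (Subgroup.map (QuotientGroup.mk' Φ) (Subgroup.closure (Set.range f)))
          = Subgroup.closure (Set.range f) ⊔ Φ := by
        rw [Subgroup.comap_map_eq, QuotientGroup.ker_mk']
      have h2 : Subgroup.closure (Set.range f) ⊔ Φ = ⊤ := by
        rw [← h3, MonoidHom.map_closure, hrange, h, Subgroup.comap_top]
      exact frattini_nongenerating h2
  -- the equivalence Ω ≃ T × (Fin d → Φ)
  choose sec hsec using hQsurj
  have hsec' : ∀ v : G ⧸ Φ, ((sec v : G) : G ⧸ Φ) = v := by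
    intro v
    have := hsec v
    simpa [QuotientGroup.mk'_apply] using this
  let e : {f : Fin d → G // Subgroup.closure (Set.range f) = ⊤}
      ≃ ({t : Fin d → G ⧸ Φ // Subgroup.closure (Set.range t) = ⊤} × (Fin d → Φ)) :=
    { toFun := fun f =>
        (⟨fun i => ((f.1 i : G) : G ⧸ Φ), (hlift f.1).mp f.2⟩,
          fun i => ⟨(sec ((f.1 i : G) : G ⧸ Φ))⁻¹ * f.1 i, by
            have h5 : (((sec ((f.1 i : G) : G ⧸ Φ))⁻¹ * f.1 i : G) : G ⧸ Φ) = 1 := by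
              rw [QuotientGroup.mk_mul, QuotientGroup.mk_inv, hsec', inv_mul_cancel]
            exact (QuotientGroup.eq_one_iff _).mp h5⟩)
      invFun := fun tc => ⟨fun i => sec (tc.1.1 i) * (tc.2 i : G), by
        have hcomp : (fun i => ((sec (tc.1.1 i) * (tc.2 i : G) : G) : G ⧸ Φ)) = tc.1.1 := by
          funext i
          have h6 : ((tc.2 i : G) : G ⧸ Φ) = 1 := (QuotientGroup.eq_one_iff _).mpr (tc.2 i).2
          rw [QuotientGroup.mk_mul, hsec', h6, mul_one]
        rw [hlift, hcomp]
        exact tc.1.2⟩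
      left_inv := fun f => Subtype.ext (funext fun i => by
        simp only [mul_inv_cancel_left])
      right_inv := fun tc => by
        have hcomp : ∀ i, ((sec (tc.1.1 i) * (tc.2 i : G) : G) : G ⧸ Φ) = tc.1.1 i := by
          intro i
          have h6 : ((tc.2 i : G) : G ⧸ Φ) = 1 := (QuotientGroup.eq_one_iff _).mpr (tc.2 i).2
          rw [QuotientGroup.mk_mul, hsec', h6, mul_one]
        refine Prod.ext (Subtype.ext (funext fun i => hcomp i)) (funext fun i => Subtype.ext ?_)
        show (sec (((sec (tc.1.1 i) * (tc.2 i : G) : G) : G ⧸ Φ)))⁻¹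
            * (sec (tc.1.1 i) * (tc.2 i : G)) = (tc.2 i : G)
        rw [hcomp i, inv_mul_cancel_left] }
  -- free action of automorphisms
  set A := G ≃* G with hA
  haveI : Finite A := Finite.of_injective (fun φ => (φ : G → G)) DFunLike.coe_injective
  letI actSMul : SMul A {f : Fin d → G // Subgroup.closure (Set.range f) = ⊤} :=
    ⟨fun φ f => ⟨fun i => φ (f.1 i), by
      have h2 := congrArg (Subgroup.map φ.toMonoidHom) f.2
      rw [MonoidHom.map_closure, Subgroup.map_top_of_surjective _ φ.surjective] at h2
      have hrange : (⇑φ.toMonoidHom) '' (Set.range f.1) = Set.range fun i => φ (f.1 i) := by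
        rw [← Set.range_comp]; rfl
      rwa [hrange] at h2⟩⟩
  letI actM : MulAction A {f : Fin d → G // Subgroup.closure (Set.range f) = ⊤} :=
    { one_smul := fun f => Subtype.ext (funext fun i => rfl)
      mul_smul := fun φ ψ f => Subtype.ext (funext fun i => rfl) }
  have hfree : ∀ (φ : A) (f : {f : Fin d → G // Subgroup.closure (Set.range f) = ⊤}),
      φ • f = f → φ = 1 := by
    intro φ f hf
    have h1 : Set.EqOn (⇑φ.toMonoidHom) (⇑(MonoidHom.id G)) (Set.range f.1) := by
      rintro x ⟨i, rfl⟩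
      exact congrFun (congrArg Subtype.val hf) i
    have h2 : φ.toMonoidHom = MonoidHom.id G := MonoidHom.eq_of_eqOn_dense f.2 h1
    exact MulEquiv.ext fun x => congrArg (fun (m : G →* G) => m x) h2
  have hstab : ∀ x : {f : Fin d → G // Subgroup.closure (Set.range f) = ⊤},
      MulAction.stabilizer A x = ⊥ := by
    intro x
    rw [eq_bot_iff]
    intro φ hφ
    exact Subgroup.mem_bot.mpr (hfree φ x hφ)
  have eAct : {f : Fin d → G // Subgroup.closure (Set.range f) = ⊤}
      ≃ (MulAction.orbitRel.Quotient A {f : Fin d → G // Subgroup.closure (Set.range f) = ⊤}) × A :=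
    (MulAction.selfEquivSigmaOrbits A _).trans
      ((Equiv.sigmaCongrRight (fun (q : MulAction.orbitRel.Quotient A
            {f : Fin d → G // Subgroup.closure (Set.range f) = ⊤}) =>
        (MulAction.orbitEquivQuotientStabilizer A (Quotient.out q)).trans
          ((Subgroup.quotientEquivOfEq (hstab (Quotient.out q))).trans
            QuotientGroup.quotientBot.toEquiv))).trans
        (Equiv.sigmaEquivProd _ A))
  -- count
  have hcardΩ : Nat.card {f : Fin d → G // Subgroup.closure (Set.range f) = ⊤}
      = p ^ (d * (k - d)) * Nat.card (GL (Fin d) (ZMod p)) := by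
    rw [Nat.card_congr e, Nat.card_prod, hcardGL, Nat.card_fun, hΦcard,
      Nat.card_eq_fintype_card (α := Fin d), Fintype.card_fin,
      ← pow_mul, Nat.mul_comm (k - d) d]
    exact Nat.mul_comm _ _
  have hdvd : Nat.card A ∣ Nat.card {f : Fin d → G // Subgroup.closure (Set.range f) = ⊤} :=
    ⟨Nat.card (MulAction.orbitRel.Quotient A
        {f : Fin d → G // Subgroup.closure (Set.range f) = ⊤}),
      by rw [Nat.card_congr eAct, Nat.card_prod, Nat.mul_comm]⟩
  rw [← hcardΩ]
  exact hdvd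
end

section
/- Let $G$ be a finite group and let $m$ be a positive integer such that every abelian subgroup of $G$ has order at most $m$. Define $g(m)$ to be the product of all prime powers that are at most $m$ (each prime power $p^j \leq m$ with $j \geq 1$ contributing one factor $p^j$). Then $|G|$ divides $g(m)$. -/
/-- `g m` is the product of all prime powers at most `m`. -/
def primePowerProduct (m : ℕ) : ℕ :=
  ∏ n ∈ (Finset.range (m + 1)).filter IsPrimePow, n

open Subgroup

section AuxLemmas

variable {p : ℕ} [Fact p.Prime] {P : Type*} [Group P] [Finite P]

omit [Fact p.Prime] [Finite P] in
private lemma aux_mul_comm_of_mem {A : Subgroup P} (hA : IsMulCommutative A) {x y : P}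
    (hx : x ∈ A) (hy : y ∈ A) : x * y = y * x :=
  congrArg Subtype.val (hA.is_comm.comm ⟨x, hx⟩ ⟨y, hy⟩)

omit [Fact p.Prime] [Finite P] in
private lemma aux_bot_isCommutative : IsMulCommutative (⊥ : Subgroup P) :=
  ⟨⟨fun x y => Subtype.ext (by
    rw [Subgroup.coe_mul, Subgroup.coe_mul,
      Subgroup.mem_bot.mp x.2, Subgroup.mem_bot.mp y.2])⟩⟩

omit [Fact p.Prime] [Finite P] in
private lemma aux_centralizer_normal (A : Subgroup P) [hA : A.Normal] :
    (Subgroup.centralizer (A : Set P)).Normal := by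
  constructor
  intro c hc g
  rw [Subgroup.mem_centralizer_iff] at hc ⊢
  intro a ha
  have h1 : g⁻¹ * a * g ∈ A := by simpa using hA.conj_mem a ha g⁻¹
  have h2 := hc _ h1
  have h3 := congrArg (fun x => g * x * g⁻¹) h2
  simp only [mul_assoc] at h3 ⊢
  simpa [mul_assoc] using h3

/-- A nontrivial normal subgroup of a finite `p`-group meets the center nontrivially. -/
private lemma aux_normal_meets_center {G : Type*} [Group G] [Finite G] (hG : IsPGroup p G)
    (N : Subgroup G) [N.Normal] (hN : N ≠ ⊥) :
    ∃ x : G, x ∈ N ∧ x ≠ 1 ∧ x ∈ Subgroup.center G := by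
  letI : MulAction G N := MulAction.compHom N (MulAut.conjNormal : G →* MulAut N)
  have hmod := hG.card_modEq_card_fixedPoints N
  have hpN : p ∣ Nat.card N := by
    obtain ⟨k, hk⟩ := IsPGroup.iff_card.mp (hG.to_subgroup N)
    rcases Nat.eq_zero_or_pos k with hk0 | hk0
    · exfalso; apply hN; rw [← Subgroup.card_eq_one, hk, hk0, pow_zero]
    · rw [hk]; exact dvd_pow_self p hk0.ne'
  have hfix : p ∣ Nat.card (MulAction.fixedPoints G N) :=
    Nat.modEq_zero_iff_dvd.mp (hmod.symm.trans ((Nat.modEq_zero_iff_dvd).mpr hpN))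
  have hone : (⟨(1 : G), N.one_mem⟩ : N) ∈ MulAction.fixedPoints G N := by
    intro g
    show (MulAut.conjNormal g) _ = _
    ext; simp
  have hcard : 1 < Nat.card (MulAction.fixedPoints G N) := by
    have h0 : 0 < Nat.card (MulAction.fixedPoints G N) :=
      Nat.card_pos_iff.mpr ⟨⟨_, hone⟩, inferInstance⟩
    have hple := Nat.le_of_dvd h0 hfix
    have := (Fact.out : p.Prime).two_le
    omega
  haveI : Nontrivial (MulAction.fixedPoints G N) := Finite.one_lt_card_iff_nontrivial.mp hcard
  obtain ⟨y, hy⟩ := exists_ne (⟨⟨1, N.one_mem⟩, hone⟩ : MulAction.fixedPoints G N)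
  refine ⟨(y : N), (y : N).2, ?_, ?_⟩
  · intro h
    apply hy
    ext
    exact h
  · rw [Subgroup.mem_center_iff]
    intro g
    have hyg := y.2 g
    have hconj : g * (y : N) * g⁻¹ = (y : N) := by
      have h5 : ((MulAut.conjNormal g) (y : N) : G) = ((y : N) : G) :=
        congrArg Subtype.val hyg
      simpa [MulAut.conjNormal_apply] using h5
    calc g * (y : N) = (g * (y : N) * g⁻¹) * g := by group
    _ = (y : N) * g := by rw [hconj]

private lemma aux_commutator_ne_self (hP : IsPGroup p P) (A : Subgroup P) [A.Normal]
    (hA : A ≠ ⊥) : ⁅(⊤ : Subgroup P), A⁆ ≠ A := by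
  intro hEq
  have hnil : Group.IsNilpotent P := hP.isNilpotent
  obtain ⟨n, hn⟩ := _root_.nilpotent_iff_lowerCentralSeries.mp hnil
  apply hA
  have key : ∀ k, A ≤ Subgroup.lowerCentralSeries (⊤ : Subgroup P) k := by
    intro k
    induction k with
    | zero => exact le_top
    | succ k ih =>
      calc A = ⁅(⊤ : Subgroup P), A⁆ := hEq.symm
      _ = ⁅A, (⊤ : Subgroup P)⁆ := Subgroup.commutator_comm _ _
      _ ≤ ⁅Subgroup.lowerCentralSeries (⊤ : Subgroup P) k, ⊤⁆ := Subgroup.commutator_mono ih le_rfl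
      _ = Subgroup.lowerCentralSeries (⊤ : Subgroup P) (k+1) := rfl
  exact le_bot_iff.mp (hn ▸ key n)

/-- Key inductive step: the index of the centralizer of a normal abelian subgroup of
order `p ^ n` in a finite `p`-group divides `p ^ 0 * p ^ 1 * ⋯ * p ^ (n-1)`. -/
private lemma aux_centralizer_index_dvd (hP : IsPGroup p P) :
    ∀ (n : ℕ) (A : Subgroup P), A.Normal → IsMulCommutative A → Nat.card A = p ^ n →
      (Subgroup.centralizer (A : Set P)).index ∣ ∏ j ∈ Finset.range n, p ^ j := by
  intro n
  induction n with
  | zero =>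
    intro A _ _ hcard
    have hbot : A = ⊥ := Subgroup.card_eq_one.mp (by simpa using hcard)
    subst hbot
    have htop : Subgroup.centralizer ((⊥ : Subgroup P) : Set P) = ⊤ := by
      rw [eq_top_iff]
      intro g _
      rw [Subgroup.mem_centralizer_iff]
      rintro h hh
      rw [Subgroup.coe_bot, Set.mem_singleton_iff] at hh
      subst hh; group
    rw [htop, Subgroup.index_top]
    simp
  | succ n ih =>
    intro A hAnormal hAcomm hcard
    haveI := hAnormal
    have hp2 := (Fact.out : p.Prime).two_le
    have hAbot : A ≠ ⊥ := by
      intro h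
      rw [h, Subgroup.card_bot] at hcard
      have : 1 < p ^ (n+1) := Nat.one_lt_pow (by omega) (by omega)
      omega
    set K := ⁅(⊤ : Subgroup P), A⁆ with hKdef
    have hKA : K ≤ A := Subgroup.commutator_le_right ⊤ A
    have hKne : K ≠ A := aux_commutator_ne_self hP A hAbot
    obtain ⟨k, hk⟩ := IsPGroup.iff_card.mp (hP.to_subgroup K)
    have hkdvd : p ^ k ∣ p ^ (n+1) := by
      rw [← hk, ← hcard]; exact Subgroup.card_dvd_of_le hKA
    have hkn : k ≤ n := by
      have hk1 : k ≤ n + 1 := (Nat.pow_dvd_pow_iff_le_right (Fact.out : p.Prime).one_lt).mp hkdvd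
      rcases Nat.lt_or_ge k (n+1) with h | h
      · omega
      · exfalso
        apply hKne
        apply Subgroup.eq_of_le_of_card_ge hKA
        rw [hcard, hk]
        have hkeq : k = n + 1 := by omega
        rw [hkeq]
    -- find B with K ≤ B ≤ A and card B = p ^ n
    have hcardsub : Nat.card (K.subgroupOf A) = p ^ k := by
      rw [← hk]
      exact Nat.card_congr (Subgroup.subgroupOfEquivOfLe hKA).toEquiv
    obtain ⟨B', hB'card, hKB'⟩ :=
      Sylow.exists_subgroup_card_pow_prime_le (G := A) p
        (by rw [hcard]; exact pow_dvd_pow p (by omega)) (K.subgroupOf A) hcardsub hkn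
    set B : Subgroup P := B'.map A.subtype with hBdef
    have hBA : B ≤ A := Subgroup.map_subtype_le B'
    have hKB : K ≤ B := by
      have h := Subgroup.map_mono (f := A.subtype) hKB'
      rwa [Subgroup.subgroupOf_map_subtype, inf_eq_left.mpr hKA] at h
    have hBcard : Nat.card B = p ^ n := by
      rw [← hB'card]
      exact (Nat.card_congr
        (Subgroup.equivMapOfInjective B' A.subtype A.subtype_injective).toEquiv).symm
    have hBnormal : B.Normal := by
      constructor
      intro b hb g
      have h1 : g * b * g⁻¹ * b⁻¹ ∈ K :=
        Subgroup.commutator_mem_commutator (Subgroup.mem_top g) (hBA hb)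
      have h2 : (g * b * g⁻¹ * b⁻¹) * b ∈ B := B.mul_mem (hKB h1) hb
      simpa [mul_assoc] using h2
    have hBcomm : IsMulCommutative B :=
      ⟨⟨fun x y => Subtype.ext (aux_mul_comm_of_mem hAcomm (hBA x.2) (hBA y.2))⟩⟩
    -- pick t ∈ A \ B
    have hBltA : B < A := by
      refine lt_of_le_of_ne hBA ?_
      intro h
      rw [h, hcard] at hBcard
      have := Nat.pow_right_injective hp2 hBcard
      omega
    obtain ⟨t, htA, htB⟩ := SetLike.exists_of_lt hBltA
    have hmemB : ∀ x : P, x * t * x⁻¹ * t⁻¹ ∈ B := fun x =>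
      hKB (Subgroup.commutator_mem_commutator (Subgroup.mem_top x) htA)
    have hcent : ∀ g : P, g ∈ Subgroup.centralizer (B : Set P) → ∀ b ∈ B, g * b = b * g := by
      intro g hg b hb
      exact (Subgroup.mem_centralizer_iff.mp hg b hb).symm
    set φ : ↥(Subgroup.centralizer (B : Set P)) →* P :=
      { toFun := fun g => (g : P) * t * (g : P)⁻¹ * t⁻¹
        map_one' := by simp
        map_mul' := by
          rintro ⟨g, hg⟩ ⟨h, hh⟩
          simp only [Subgroup.coe_mul]
          have hBg : g * t * g⁻¹ * t⁻¹ ∈ A := hBA (hmemB g)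
          have hBh : h * t * h⁻¹ * t⁻¹ ∈ A := hBA (hmemB h)
          have h2 : g * (h * t * h⁻¹ * t⁻¹) = (h * t * h⁻¹ * t⁻¹) * g :=
            hcent g hg _ (hmemB h)
          have h3 := aux_mul_comm_of_mem hAcomm hBh hBg
          calc (g * h) * t * (g * h)⁻¹ * t⁻¹
              = g * (h * t * h⁻¹ * t⁻¹) * g⁻¹ * (g * t * g⁻¹ * t⁻¹) := by group
          _ = (h * t * h⁻¹ * t⁻¹) * g * g⁻¹ * (g * t * g⁻¹ * t⁻¹) := by rw [h2]
          _ = (h * t * h⁻¹ * t⁻¹) * (g * t * g⁻¹ * t⁻¹) := by group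
          _ = (g * t * g⁻¹ * t⁻¹) * (h * t * h⁻¹ * t⁻¹) := h3 } with hφdef
    have hrange : φ.range ≤ B := by
      rintro x ⟨g, rfl⟩
      exact hmemB g
    have hkerφ : ((Subgroup.centralizer (A : Set P)).subgroupOf
        (Subgroup.centralizer (B : Set P))) = φ.ker := by
      ext g
      rw [Subgroup.mem_subgroupOf, MonoidHom.mem_ker]
      constructor
      · intro hgA
        have ht1 : t * (g : P) = (g : P) * t := Subgroup.mem_centralizer_iff.mp hgA t htA
        show (g : P) * t * (g : P)⁻¹ * t⁻¹ = 1
        rw [← ht1]; group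
      · intro hφ1
        have hφ1' : (g : P) * t * (g : P)⁻¹ * t⁻¹ = 1 := hφ1
        have hgt : (g : P) * t = t * (g : P) := by
          calc (g : P) * t = ((g : P) * t * (g : P)⁻¹ * t⁻¹) * (t * (g : P)) := by group
          _ = t * (g : P) := by rw [hφ1']; group
        -- show B ⊔ zpowers t = A
        have hDle : B ⊔ Subgroup.zpowers t ≤ A := sup_le hBA (Subgroup.zpowers_le.mpr htA)
        obtain ⟨d, hd⟩ := IsPGroup.iff_card.mp (hP.to_subgroup (B ⊔ Subgroup.zpowers t))
        have hnd : n ≤ d := by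
          have h1 : p ^ n ∣ p ^ d := by
            rw [← hd, ← hBcard]; exact Subgroup.card_dvd_of_le le_sup_left
          exact (Nat.pow_dvd_pow_iff_le_right (Fact.out : p.Prime).one_lt).mp h1
        have hdn1 : d ≤ n + 1 := by
          have h1 : p ^ d ∣ p ^ (n+1) := by
            rw [← hd, ← hcard]; exact Subgroup.card_dvd_of_le hDle
          exact (Nat.pow_dvd_pow_iff_le_right (Fact.out : p.Prime).one_lt).mp h1
        have hdne : d ≠ n := by
          intro h
          have hBD : B = B ⊔ Subgroup.zpowers t :=
            Subgroup.eq_of_le_of_card_ge le_sup_left (by rw [hd, hBcard, h])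
          apply htB
          rw [hBD]
          exact Subgroup.mem_sup_right (Subgroup.mem_zpowers t)
        have hDA : B ⊔ Subgroup.zpowers t = A :=
          Subgroup.eq_of_le_of_card_ge hDle (by
            rw [hcard, hd]
            have : d = n + 1 := by omega
            rw [this])
        rw [Subgroup.mem_centralizer_iff]
        intro a ha
        rw [← hDA] at ha
        have hAle : B ⊔ Subgroup.zpowers t ≤ Subgroup.centralizer {(g : P)} := by
          apply sup_le
          · intro b hb
            exact Subgroup.mem_centralizer_singleton_iff.mpr (hcent _ g.2 b hb).symm
          · exact Subgroup.zpowers_le.mpr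
              (Subgroup.mem_centralizer_singleton_iff.mpr hgt.symm)
        exact Subgroup.mem_centralizer_singleton_iff.mp (hAle ha)
    -- index bookkeeping
    have hle2 : Subgroup.centralizer (A : Set P) ≤ Subgroup.centralizer (B : Set P) :=
      Subgroup.centralizer_le (SetLike.coe_subset_coe.mpr hBA)
    have h1 : (Subgroup.centralizer (A : Set P)).relIndex (Subgroup.centralizer (B : Set P))
        ∣ p ^ n := by
      rw [Subgroup.relIndex, hkerφ, Subgroup.index_ker, ← hBcard]
      exact Subgroup.card_dvd_of_le hrange
    have h2 := ih B hBnormal hBcomm hBcard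
    rw [← Subgroup.relIndex_mul_index hle2, Finset.prod_range_succ,
      mul_comm (∏ j ∈ Finset.range n, p ^ j) (p ^ n)]
    exact mul_dvd_mul h1 h2

/-- Every finite `p`-group has a normal abelian subgroup that is its own centralizer. -/
private lemma aux_exists_maximal_selfcentralizing (hP : IsPGroup p P) :
    ∃ A : Subgroup P, A.Normal ∧ IsMulCommutative A ∧
      Subgroup.centralizer (A : Set P) = A := by
  haveI : Finite (Subgroup P) :=
    Finite.of_injective (fun H : Subgroup P => (H : Set P)) SetLike.coe_injective
  have hwf : WellFounded ((· > ·) : Subgroup P → Subgroup P → Prop) := IsWellFounded.wf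
  set S : Set (Subgroup P) := {A | A.Normal ∧ IsMulCommutative A} with hS
  obtain ⟨A, hAS, hmax⟩ :=
    hwf.has_min S ⟨⊥, (inferInstance : (⊥ : Subgroup P).Normal), aux_bot_isCommutative⟩
  haveI := hAS.1
  haveI := hAS.2
  refine ⟨A, hAS.1, hAS.2, le_antisymm ?_ (Subgroup.le_centralizer A)⟩
  by_contra hnot
  obtain ⟨x, hxC, hxA⟩ := SetLike.not_le_iff_exists.mp hnot
  haveI : (Subgroup.centralizer (A : Set P)).Normal := aux_centralizer_normal A
  set π := QuotientGroup.mk' A with hπ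
  set N := (Subgroup.centralizer (A : Set P)).map π with hN
  haveI : N.Normal := Subgroup.Normal.map inferInstance π (QuotientGroup.mk'_surjective A)
  have hQ : IsPGroup p (P ⧸ A) := hP.to_quotient A
  have hNbot : N ≠ ⊥ := by
    intro h
    have hmem : π x ∈ N := Subgroup.mem_map_of_mem π hxC
    rw [h, Subgroup.mem_bot] at hmem
    exact hxA ((QuotientGroup.eq_one_iff x).mp hmem)
  obtain ⟨q, hqN, hq1, hqZ⟩ := aux_normal_meets_center hQ N hNbot
  obtain ⟨c, hcC, hcq⟩ := hqN
  have hcA : c ∉ A := fun h => hq1 (by rw [← hcq]; exact (QuotientGroup.eq_one_iff c).mpr h)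
  set B := (Subgroup.zpowers q).comap π with hB
  have hzpN : (Subgroup.zpowers q).Normal := by
    constructor
    intro n hn g
    have hnZ : n ∈ Subgroup.center (P ⧸ A) := by
      obtain ⟨k, hk⟩ := hn
      rw [← hk]
      exact Subgroup.zpow_mem _ hqZ k
    have h1 : g * n = n * g := Subgroup.mem_center_iff.mp hnZ g
    have h2 : g * n * g⁻¹ = n := by rw [h1]; group
    rw [h2]; exact hn
  haveI := hzpN
  have hBnormal : B.Normal := hzpN.comap π
  have hAB : A ≤ B := by
    intro a ha
    show π a ∈ Subgroup.zpowers q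
    have h1 : π a = 1 := (QuotientGroup.eq_one_iff a).mpr ha
    rw [h1]; exact one_mem _
  have hcB : c ∈ B := by
    show π c ∈ Subgroup.zpowers q
    rw [hcq]; exact Subgroup.mem_zpowers q
  have hAltB : A < B := lt_of_le_of_ne hAB (fun h => hcA (h ▸ hcB))
  have hdecomp : ∀ y ∈ B, ∃ (k : ℤ) (a : P), a ∈ A ∧ y = c ^ k * a := by
    intro y hy
    obtain ⟨k, hk⟩ := hy
    refine ⟨k, (c ^ k)⁻¹ * y, ?_, by group⟩
    rw [← QuotientGroup.eq_one_iff]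
    show π ((c ^ k)⁻¹ * y) = 1
    rw [map_mul, map_inv, map_zpow, hcq]
    rw [show ((fun x => q ^ x) k : P ⧸ A) = q ^ k from rfl] at hk
    rw [hk]
    simp
  have hBcomm : IsMulCommutative B := by
    constructor; constructor
    rintro ⟨y, hy⟩ ⟨z, hz⟩
    apply Subtype.ext
    obtain ⟨k, a, haA, rfl⟩ := hdecomp y hy
    obtain ⟨l, b, hbA, rfl⟩ := hdecomp z hz
    show (c ^ k * a) * (c ^ l * b) = (c ^ l * b) * (c ^ k * a)
    have hcx : ∀ u : P, u ∈ A → Commute c u := fun u hu =>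
      (Subgroup.mem_centralizer_iff.mp hcC u hu).symm
    have hkl : Commute (c ^ k) (c ^ l) := (Commute.refl c).zpow_zpow k l
    have hkb : Commute (c ^ k) b := (hcx b hbA).zpow_left k
    have hal : Commute a (c ^ l) := ((hcx a haA).zpow_left l).symm
    have hab : Commute a b :=
      congrArg Subtype.val (hAS.2.is_comm.comm ⟨a, haA⟩ ⟨b, hbA⟩)
    exact ((hkl.mul_right hkb).mul_left (hal.mul_right hab)).eq
  exact hmax B ⟨hBnormal, hBcomm⟩ hAltB

/-- If every abelian subgroup of a finite `p`-group `P` has order dividing `p ^ b`,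
then the order of `P` divides `p ^ 0 * p ^ 1 * ⋯ * p ^ b`. -/
private lemma aux_pgroup_card_dvd (hP : IsPGroup p P) (b : ℕ)
    (hb : ∀ A : Subgroup P, IsMulCommutative A → Nat.card A ∣ p ^ b) :
    Nat.card P ∣ ∏ j ∈ Finset.range (b + 1), p ^ j := by
  obtain ⟨A, hAn, hAc, hAcent⟩ := aux_exists_maximal_selfcentralizing hP
  haveI := hAn
  obtain ⟨a, ha⟩ := IsPGroup.iff_card.mp (hP.to_subgroup A)
  have hab : a ≤ b :=
    (Nat.pow_dvd_pow_iff_le_right (Fact.out : p.Prime).one_lt).mp (ha ▸ hb A hAc)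
  have hidx := aux_centralizer_index_dvd hP a A hAn hAc ha
  rw [hAcent] at hidx
  have h1 : Nat.card P ∣ ∏ j ∈ Finset.range (a + 1), p ^ j := by
    have h2 : Nat.card A * A.index ∣ p ^ a * ∏ j ∈ Finset.range a, p ^ j :=
      mul_dvd_mul (dvd_of_eq ha) hidx
    rw [Subgroup.card_mul_index] at h2
    rwa [Finset.prod_range_succ, mul_comm (∏ j ∈ Finset.range a, p ^ j) (p ^ a)]
  exact h1.trans (Finset.prod_dvd_prod_of_subset _ _ _ (Finset.range_subset_range.mpr (by omega)))

end AuxLemmas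

theorem card_dvd_primePowerProduct (G : Type*) [Group G] [Finite G] (m : ℕ) (hm : 0 < m)
    (h : ∀ A : Subgroup G, IsMulCommutative A → Nat.card A ≤ m) :
    Nat.card G ∣ primePowerProduct m := by
  have hg0 : primePowerProduct m ≠ 0 := by
    rw [primePowerProduct]
    rw [Finset.prod_ne_zero_iff]
    intro n hn
    exact ((Finset.mem_filter.mp hn).2.pos).ne'
  have hG0 : Nat.card G ≠ 0 := Nat.card_pos.ne'
  rw [← Nat.factorization_le_iff_dvd hG0 hg0, Finsupp.le_def]
  intro q
  by_cases hq : q.Prime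
  swap
  · simp [Nat.factorization_eq_zero_of_not_prime _ hq]
  haveI : Fact q.Prime := ⟨hq⟩
  obtain ⟨P⟩ := (inferInstance : Nonempty (Sylow q G))
  set b := Nat.log q m with hbdef
  have hPcard : Nat.card P = q ^ (Nat.card G).factorization q := P.card_eq_multiplicity
  have hhyp : ∀ A : Subgroup ↥(P : Subgroup G), IsMulCommutative A → Nat.card A ∣ q ^ b := by
    intro A hA
    haveI := hA
    have hcomm' : IsMulCommutative (A.map (P : Subgroup G).subtype) := inferInstance
    have hcards : Nat.card (A.map (P : Subgroup G).subtype) = Nat.card A :=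
      (Nat.card_congr (Subgroup.equivMapOfInjective A _
        (Subgroup.subtype_injective _)).toEquiv).symm
    have hle : Nat.card A ≤ m := hcards ▸ h _ hcomm'
    obtain ⟨j, hj⟩ := IsPGroup.iff_card.mp ((P.isPGroup').to_subgroup A)
    rw [hj] at hle ⊢
    exact pow_dvd_pow q ((Nat.le_log_iff_pow_le hq.one_lt hm.ne').mpr hle)
  have hdvd := aux_pgroup_card_dvd P.isPGroup' b hhyp
  rw [hPcard, Finset.prod_pow_eq_pow_sum] at hdvd
  have hexp : (Nat.card G).factorization q ≤ ∑ j ∈ Finset.range (b + 1), j :=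
    (Nat.pow_dvd_pow_iff_le_right hq.one_lt).mp hdvd
  refine hexp.trans ?_
  rw [primePowerProduct,
    Nat.factorization_prod (fun x hx => ((Finset.mem_filter.mp hx).2.pos).ne'),
    Finsupp.finset_sum_apply, Finset.sum_range_succ']
  simp only [add_zero]
  have himg : ∑ i ∈ Finset.range b, (i + 1)
      = ∑ n ∈ (Finset.range b).image (fun i => q ^ (i + 1)), n.factorization q := by
    rw [Finset.sum_image (fun i _ j _ hij =>
      Nat.succ_injective (Nat.pow_right_injective hq.two_le hij))]
    apply Finset.sum_congr rfl
    intro i _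
    rw [hq.factorization_pow, Finsupp.single_eq_same]
  rw [himg]
  apply Finset.sum_le_sum_of_subset
  intro n hn
  obtain ⟨i, hi, rfl⟩ := Finset.mem_image.mp hn
  rw [Finset.mem_filter]
  constructor
  · rw [Finset.mem_range]
    have hib : i < b := Finset.mem_range.mp hi
    have h1 : q ^ (i + 1) ≤ q ^ b := Nat.pow_le_pow_right hq.pos (by omega)
    have h2 : q ^ b ≤ m := Nat.pow_log_le_self q hm.ne'
    omega
  · exact ⟨q, i + 1, hq.prime, by omega, rfl⟩
end

section
/- Let $G$ be a finite group, let $m$ be the maximal order of an abelian subgroup of $G$, and suppose a prime $p > m/2$ divides $|G|$. Then a Sylow $p$-subgroup $P$ of $G$ has order exactly $p$ and is self-centralising, i.e., $C_G(P) = P$. -/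
theorem sylow_self_centralizing_of_large_prime
    (G : Type*) [Group G] [Finite G] (m p : ℕ) (hp : Fact p.Prime)
    (hm : IsGreatest {n | ∃ A : Subgroup G, IsMulCommutative A ∧ Nat.card A = n} m)
    (hlarge : m < 2 * p) (hdvd : p ∣ Nat.card G) (P : Sylow p G) :
    Nat.card P = p ∧ Subgroup.centralizer ((P : Subgroup G) : Set G) = P := by
  have hp2 : 2 ≤ p := hp.out.two_le
  have hG0 : Nat.card G ≠ 0 := Nat.card_pos.ne'
  -- no abelian subgroup bigger than m, so p^2 does not divide |G|
  have hnotsq : ¬ p ^ 2 ∣ Nat.card G := by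
    intro hsq
    obtain ⟨K, hK⟩ := Sylow.exists_subgroup_card_pow_prime p hsq
    have hKcomm : IsMulCommutative K := by
      constructor
      exact ⟨IsPGroup.commutative_of_card_eq_prime_sq hK⟩
    have hle : p ^ 2 ≤ m := hm.2 ⟨K, hKcomm, hK⟩
    have : p ^ 2 < 2 * p := lt_of_le_of_lt hle hlarge
    nlinarith
  -- hence the multiplicity of p in |G| is 1
  have hfact : (Nat.card G).factorization p = 1 := by
    have h1 : 1 ≤ (Nat.card G).factorization p :=
      (hp.out.factorization_pos_of_dvd hG0 hdvd)
    have h2 : (Nat.card G).factorization p < 2 := by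
      by_contra h
      push_neg at h
      exact hnotsq ((pow_dvd_pow p h).trans (Nat.ordProj_dvd _ p))
    omega
  have hcard : Nat.card P = p := by
    rw [Sylow.card_eq_multiplicity, hfact, pow_one]
  refine ⟨hcard, ?_⟩
  -- P is commutative
  haveI : IsCyclic P := isCyclic_of_prime_card hcard
  haveI hPcomm : IsMulCommutative (P : Subgroup G) := by
    letI := IsCyclic.commGroup (α := (P : Subgroup G))
    exact ⟨⟨fun a b => mul_comm a b⟩⟩
  refine le_antisymm ?_ (Subgroup.le_centralizer _)
  intro x hx
  set A : Subgroup G := (P : Subgroup G) ⊔ Subgroup.zpowers x with hA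
  have hxP : Subgroup.zpowers x ≤ Subgroup.centralizer ((P : Subgroup G) : Set G) :=
    Subgroup.zpowers_le.2 hx
  have hAcomm : IsMulCommutative A := by
    rw [← Subgroup.le_centralizer_iff_isMulCommutative]
    refine sup_le ?_ ?_
    · rw [Subgroup.le_centralizer_iff]
      exact sup_le (Subgroup.le_centralizer _) hxP
    · rw [Subgroup.le_centralizer_iff]
      refine sup_le ?_ ?_
      · rw [Subgroup.le_centralizer_iff]; exact hxP
      · exact Subgroup.le_centralizer _
  have hAm : Nat.card A ≤ m := hm.2 ⟨A, hAcomm, rfl⟩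
  have hPA : (P : Subgroup G) ≤ A := le_sup_left
  have hdvdA : p ∣ Nat.card A := hcard ▸ Subgroup.card_dvd_of_le hPA
  have hA0 : Nat.card A ≠ 0 := Nat.card_pos.ne'
  obtain ⟨k, hk⟩ := hdvdA
  have h1 : p * k ≤ m := hk ▸ hAm
  have h2 : p * k ≠ 0 := hk ▸ hA0
  have hk0 : 1 ≤ k := Nat.one_le_iff_ne_zero.2 (by rintro rfl; simp at h2)
  have hk2 : k < 2 := by
    by_contra h
    push_neg at h
    have : 2 * p ≤ p * k := by
      calc 2 * p = p * 2 := Nat.mul_comm _ _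
        _ ≤ p * k := Nat.mul_le_mul_left p h
    omega
  have hk1 : k = 1 := by omega
  have hAP : (P : Subgroup G) = A := by
    apply Subgroup.eq_of_le_of_card_ge hPA
    rw [hk, hk1, mul_one, hcard]
  have hxA : x ∈ A := Subgroup.mem_sup_right (Subgroup.mem_zpowers x)
  rw [← hAP] at hxA
  exact hxA
end

section
/- Let $G$ be a finite group, $m$ the maximal order of an abelian subgroup of $G$, and suppose a prime $p > m/2$ divides $|G|$. If $N$ is a minimal normal subgroup of $G$ whose order is not divisible by $p$, then $N$ is nilpotent. -/
/-- If an element of order `p` acts (by conjugation) fixed-point-freely on a subgroup `A`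
that it normalizes, then `|A| ≡ 1 (mod p)`. -/
lemma card_modEq_one_of_fpf {G : Type*} [Group G] [Finite G] {p : ℕ} (hp : p.Prime)
    {g : G} (hg : orderOf g = p) {A : Subgroup G} (hgA : g ∈ Subgroup.normalizer (A : Set G))
    (hfix : ∀ x ∈ A, g * x * g⁻¹ = x → x = 1) :
    Nat.card A ≡ 1 [MOD p] := by
  haveI : Fact p.Prime := ⟨hp⟩
  set H := Subgroup.zpowers g with hHdef
  have hHnorm : H ≤ Subgroup.normalizer (A : Set G) := Subgroup.zpowers_le.mpr hgA
  have hmem : ∀ (h : H) (a : A), (h : G) * a * (h : G)⁻¹ ∈ A := fun h a =>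
    (Subgroup.mem_normalizer_iff.mp (hHnorm h.2) a).mp a.2
  letI : SMul H A := ⟨fun h a => ⟨h * a * h⁻¹, hmem h a⟩⟩
  have smul_def : ∀ (h : H) (a : A), ((h • a : A) : G) = h * a * h⁻¹ := fun _ _ => rfl
  letI : MulAction H A :=
    { one_smul := fun a => Subtype.ext (by simp [smul_def]),
      mul_smul := fun h k a => Subtype.ext (by
        simp only [smul_def, Subgroup.coe_mul, mul_inv_rev]
        group) }
  have hpH : IsPGroup p H := IsPGroup.of_card (by rw [Nat.card_zpowers, hg, pow_one])
  have hcard1 : Nat.card (MulAction.fixedPoints H A) = 1 := by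
    have hfp : MulAction.fixedPoints H A = {1} := by
      ext a
      simp only [MulAction.mem_fixedPoints, Set.mem_singleton_iff]
      constructor
      · intro h
        have h2 : g * (a : G) * g⁻¹ = a := by
          have := congrArg Subtype.val (h ⟨g, Subgroup.mem_zpowers g⟩)
          simpa [smul_def] using this
        exact Subtype.ext (hfix a a.2 h2)
      · rintro rfl h
        exact Subtype.ext (by simp [smul_def])
    rw [hfp]
    simp
  have := hpH.card_modEq_card_fixedPoints A
  rwa [hcard1] at this

/-- Under the hypotheses of the main theorem, any element of order `p` acts fixed-point-freely
on `N`. -/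
lemma fpf_aux {G : Type*} [Group G] [Finite G] {m p : ℕ} (hp : p.Prime)
    (hm : IsGreatest {n | ∃ A : Subgroup G, IsMulCommutative A ∧ Nat.card A = n} m)
    (hlarge : m < 2 * p) {N : Subgroup G} (hpN : ¬ p ∣ Nat.card N)
    {g : G} (hg : orderOf g = p) {x : G} (hx : x ∈ N) (hx1 : x ≠ 1)
    (hconj : g * x * g⁻¹ = x) : False := by
  have hco : Commute g x := mul_inv_eq_iff_eq_mul.mp hconj
  have hordx : orderOf x ∣ Nat.card N := by
    rw [← Nat.card_zpowers]
    exact Subgroup.card_dvd_of_le (Subgroup.zpowers_le.mpr hx)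
  have hcop : (orderOf g).Coprime (orderOf x) := by
    rw [hg]
    exact hp.coprime_iff_not_dvd.mpr (fun h => hpN (h.trans hordx))
  have hord : orderOf (g * x) = p * orderOf x := by
    rw [hco.orderOf_mul_eq_mul_orderOf_of_coprime hcop, hg]
  have h2 : 2 ≤ orderOf x := by
    have h0 : 0 < orderOf x := orderOf_pos x
    have h1 : orderOf x ≠ 1 := fun h => hx1 (orderOf_eq_one_iff.mp h)
    omega
  have hle : Nat.card (Subgroup.zpowers (g * x)) ≤ m :=
    hm.2 ⟨Subgroup.zpowers (g * x), Subgroup.zpowers_isMulCommutative _, rfl⟩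
  rw [Nat.card_zpowers, hord] at hle
  have : p * 2 ≤ p * orderOf x := Nat.mul_le_mul_left p h2
  omega

theorem minimal_normal_nilpotent_of_large_prime
    (G : Type*) [Group G] [Finite G] (m p : ℕ) (hp : p.Prime)
    (hm : IsGreatest {n | ∃ A : Subgroup G, IsMulCommutative A ∧ Nat.card A = n} m)
    (hlarge : m < 2 * p) (hdvd : p ∣ Nat.card G)
    (N : Subgroup G) (hNn : N.Normal) (hNbot : N ≠ ⊥)
    (hmin : ∀ K : Subgroup G, K.Normal → K ≤ N → K = ⊥ ∨ K = N)
    (hpN : ¬ p ∣ Nat.card N) :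
    Group.IsNilpotent N := by
  haveI : Fact p.Prime := ⟨hp⟩
  have hN1 : 1 < Nat.card N := N.one_lt_card_iff_ne_bot.mpr hNbot
  -- Key claim: every prime `q` dividing `|N|` satisfies `q ^ b = p + 1` for some `b ≥ 1`.
  have key : ∀ q : ℕ, q.Prime → q ∣ Nat.card N → ∃ b : ℕ, 1 ≤ b ∧ q ^ b = p + 1 := by
    intro q hq hqN
    haveI : Fact q.Prime := ⟨hq⟩
    obtain ⟨Q⟩ : Nonempty (Sylow q N) := inferInstance
    set Q' : Subgroup G := (Q : Subgroup N).map N.subtype with hQ'def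
    have hQ'N : Q' ≤ N := Subgroup.map_subtype_le _
    have hfr : Subgroup.normalizer (Q' : Set G) ⊔ N = ⊤ := Sylow.normalizer_sup_eq_top Q
    -- p divides the cardinality of the normalizer
    have hpH : p ∣ Nat.card (Subgroup.normalizer (Q' : Set G)) := by
      set H := Subgroup.normalizer (Q' : Set G) with hHdef
      have hπ : H.map (QuotientGroup.mk' N) = ⊤ := by
        have hNmap : Subgroup.map (QuotientGroup.mk' N) N = ⊥ :=
          (Subgroup.map_eq_bot_iff _).mpr (by rw [QuotientGroup.ker_mk'])
        have hc := congrArg (Subgroup.map (QuotientGroup.mk' N)) hfr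
        rw [Subgroup.map_sup, hNmap,
          Subgroup.map_top_of_surjective _ (QuotientGroup.mk'_surjective N), sup_bot_eq] at hc
        exact hc
      have h1 : Nat.card (G ⧸ N) ∣ Nat.card H := by
        have hs := (QuotientGroup.mk' N).subgroupMap_surjective H
        have : Nat.card (H.map (QuotientGroup.mk' N)) ∣ Nat.card H :=
          Subgroup.card_dvd_of_surjective _ hs
        rwa [hπ, Subgroup.card_top] at this
      have h2 : p ∣ Nat.card (G ⧸ N) := by
        have hcards := Subgroup.card_eq_card_quotient_mul_card_subgroup N
        rcases (Nat.Prime.dvd_mul hp).mp (hcards ▸ hdvd) with h | h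
        · exact h
        · exact absurd h hpN
      exact h2.trans h1
    -- get an element g of order p normalizing Q'
    obtain ⟨g₀, hg₀⟩ := exists_prime_orderOf_dvd_card' (G := Subgroup.normalizer (Q' : Set G)) p hpH
    set g : G := (g₀ : G) with hgdef
    have hgord : orderOf g = p := by
      rw [← hg₀]
      exact orderOf_injective (Subgroup.normalizer (Q' : Set G)).subtype (Subgroup.subtype_injective _) g₀
    have hgnorm : g ∈ Subgroup.normalizer (Q' : Set G) := g₀.2
    have hnq : ∀ h : G, h ∈ Q' ↔ g * h * g⁻¹ ∈ Q' := Subgroup.mem_normalizer_iff.mp hgnorm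
    -- conjugation by elements of the normalizer preserves the centralizer
    have hcent : ∀ u : G, u ∈ Subgroup.normalizer (Q' : Set G) → ∀ h : G, h ∈ Subgroup.centralizer (Q' : Set G) →
        u * h * u⁻¹ ∈ Subgroup.centralizer (Q' : Set G) := by
      intro u hu h hh
      rw [Subgroup.mem_centralizer_iff] at hh ⊢
      intro x hx
      have hx' : u⁻¹ * x * u ∈ Q' := by
        have := (Subgroup.mem_normalizer_iff.mp ((Subgroup.normalizer (Q' : Set G)).inv_mem hu) x).mp hx
        simpa using this
      have hcomm := hh _ hx'
      have := congrArg (fun w => u * w * u⁻¹) hcomm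
      simp only [mul_assoc] at this ⊢
      calc x * (u * (h * u⁻¹)) = u * (u⁻¹ * (x * (u * (h * u⁻¹)))) := by group
        _ = u * (h * (u⁻¹ * (x * (u * u⁻¹)))) := by
            rw [show u⁻¹ * (x * (u * (h * u⁻¹))) = (u⁻¹ * (x * (u * h))) * u⁻¹ by group,
              show u⁻¹ * (x * (u * h)) = u⁻¹ * x * u * h by group, hcomm]
            group
        _ = u * (h * (u⁻¹ * x)) := by group
    -- the abelian subgroup A = Z(Q') (as a subgroup of G)
    set A : Subgroup G := Q' ⊓ Subgroup.centralizer (Q' : Set G) with hAdef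
    have hAcomm : IsMulCommutative A := by
      constructor
      constructor
      intro a b
      have := (Subgroup.mem_centralizer_iff.mp b.2.2) a a.2.1
      exact Subtype.ext this
    have hAle : A ≤ N := le_trans inf_le_left hQ'N
    -- A is nontrivial
    have hQ'card : 1 < Nat.card Q' := by
      have hcongr : Nat.card Q' = Nat.card (Q : Subgroup N) :=
        (Nat.card_congr (Subgroup.equivMapOfInjective _ _ (Subgroup.subtype_injective N)).toEquiv).symm
      rw [hcongr, Q.card_eq_multiplicity]
      refine Nat.one_lt_pow ?_ hq.one_lt
      have := hq.factorization_pos_of_dvd (Nat.card_pos (α := N)).ne' hqN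
      omega
    haveI : Nontrivial Q' := Finite.one_lt_card_iff_nontrivial.mp hQ'card
    have hQ'p : IsPGroup q Q' := Q.2.map N.subtype
    haveI : Nontrivial (Subgroup.center Q') := hQ'p.center_nontrivial
    obtain ⟨z', hz'⟩ := exists_ne (1 : Subgroup.center Q')
    have hzA : ((z' : Q') : G) ∈ A := by
      refine Subgroup.mem_inf.mpr ⟨(z' : Q').2, Subgroup.mem_centralizer_iff.mpr ?_⟩
      intro x hx
      have := (Subgroup.mem_center_iff.mp z'.2) ⟨x, hx⟩
      exact congrArg Subtype.val this
    have hzne : ((z' : Q') : G) ≠ 1 := by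
      intro h
      exact hz' (Subtype.ext (Subtype.ext h))
    have hAbot : A ≠ ⊥ := fun h => hzne ((Subgroup.eq_bot_iff_forall A).mp h _ hzA)
    have hA1 : 1 < Nat.card A := A.one_lt_card_iff_ne_bot.mpr hAbot
    -- g normalizes A
    have hAnorm : g ∈ Subgroup.normalizer (A : Set G) := by
      rw [Subgroup.mem_normalizer_iff]
      intro h
      constructor
      · intro hh
        obtain ⟨h1, h2⟩ := Subgroup.mem_inf.mp hh
        exact Subgroup.mem_inf.mpr ⟨(hnq h).mp h1, hcent g hgnorm h h2⟩
      · intro hh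
        obtain ⟨h1, h2⟩ := Subgroup.mem_inf.mp hh
        refine Subgroup.mem_inf.mpr ⟨(hnq h).mpr h1, ?_⟩
        have := hcent g⁻¹ ((Subgroup.normalizer (Q' : Set G)).inv_mem hgnorm) _ h2
        rwa [show g⁻¹ * (g * h * g⁻¹) * g⁻¹⁻¹ = h by group] at this
    -- counting: |A| ≡ 1 mod p
    have hmod : Nat.card A ≡ 1 [MOD p] := by
      refine card_modEq_one_of_fpf hp hgord hAnorm ?_
      intro x hx hconj
      by_contra hx1
      exact fpf_aux hp hm hlarge hpN hgord (hAle hx) hx1 hconj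
    have hAm : Nat.card A ≤ m := hm.2 ⟨A, hAcomm, rfl⟩
    -- conclude |A| = p + 1
    have hcardA : Nat.card A = p + 1 := by
      have hdvd1 : p ∣ Nat.card A - 1 := (Nat.modEq_iff_dvd' (by omega)).mp hmod.symm
      obtain ⟨c, hc⟩ := hdvd1
      have hple : 2 ≤ p := hp.two_le
      have hc0 : c ≠ 0 := by rintro rfl; omega
      rcases Nat.lt_or_ge c 2 with hcl | hcl
      · have hc1 : c = 1 := by omega
        rw [hc1, mul_one] at hc
        omega
      · exfalso
        have h2c := Nat.mul_le_mul_left p hcl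
        rw [← hc] at h2c
        omega
    obtain ⟨b, hb⟩ := (IsPGroup.iff_card).mp (hQ'p.to_le inf_le_left)
    rw [hcardA] at hb
    have hp2 := hp.two_le
    refine ⟨b, ?_, hb.symm⟩
    rcases Nat.eq_zero_or_pos b with rfl | h
    · rw [pow_zero] at hb
      omega
    · omega
  -- all primes dividing |N| coincide, so N is a q-group
  set q := (Nat.card N).minFac with hqdef
  have hq : q.Prime := Nat.minFac_prime (by omega)
  have huniq : ∀ {d : ℕ}, d.Prime → d ∣ Nat.card N → d = q := by
    intro r hr hrN
    obtain ⟨b, hb1, hbq⟩ := key r hr hrN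
    obtain ⟨c, hc1, hcq⟩ := key q hq (Nat.minFac_dvd _)
    have hrd : r ∣ q ^ c := by
      rw [hcq, ← hbq]
      exact dvd_pow_self r (by omega)
    exact (Nat.prime_dvd_prime_iff_eq hr hq).mp (hr.dvd_of_dvd_pow hrd)
  have hpow := Nat.eq_prime_pow_of_unique_prime_dvd (by omega : Nat.card N ≠ 0) huniq
  have hNq : IsPGroup q N := IsPGroup.of_card hpow
  haveI : Fact q.Prime := ⟨hq⟩
  exact hNq.isNilpotent
end
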